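/- (Golden–Thompson inequality for matrices) For Hermitian n×n complex matrices a and b, tr(e^{a+b}) ≤ tr(e^a e^b). -/

import Mathlib

open scoped ComplexOrder
open scoped Matrix

namespace GTaux

variable {d : ℕ}

noncomputable def emb (U : Matrix (Fin d) (Fin d) ℂ) : EuclideanSpace ℂ (Fin d × Fin d) :=
  WithLp.toLp 2 (fun p : Fin d × Fin d => U p.1 p.2)

lemma trace_eq_inner (U V : Matrix (Fin d) (Fin d) ℂ) :
    (Uᴴ * V).trace = inner (𝕜 := ℂ) (emb U) (emb V) := by
  rw [PiLp.inner_apply]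
  simp only [RCLike.inner_apply, emb, PiLp.toLp_apply]
  rw [Fintype.sum_prod_type]
  simp only [Matrix.trace, Matrix.diag, Matrix.mul_apply, Matrix.conjTranspose_apply]
  rw [Finset.sum_comm]
  simp [mul_comm]

lemma trace_herm_sq_re_nonneg (U : Matrix (Fin d) (Fin d) ℂ) :
    0 ≤ ((Uᴴ * U).trace).re := by
  have := trace_eq_inner U U
  have h2 : 0 ≤ RCLike.re (inner (𝕜 := ℂ) (emb U) (emb U)) := inner_self_nonneg
  rw [this]
  simpa using h2

lemma norm_emb (U : Matrix (Fin d) (Fin d) ℂ) :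
    ‖emb U‖ = Real.sqrt (((Uᴴ * U).trace).re) := by
  rw [norm_eq_sqrt_re_inner (𝕜 := ℂ), ← trace_eq_inner]
  norm_num

lemma cs (U V : Matrix (Fin d) (Fin d) ℂ) :
    ‖(Uᴴ * V).trace‖ ≤
      Real.sqrt (((Uᴴ * U).trace).re) * Real.sqrt (((Vᴴ * V).trace).re) := by
  have h := norm_inner_le_norm (𝕜 := ℂ) (emb U) (emb V)
  rw [← trace_eq_inner, norm_emb, norm_emb] at h
  exact h

lemma trace_pow_mul_comm (U V : Matrix (Fin d) (Fin d) ℂ) (N : ℕ) :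
    ((U * V) ^ N).trace = ((V * U) ^ N).trace := by
  induction N with
  | zero => simp
  | succ N ih =>
    have hsc : SemiconjBy V (U * V) (V * U) := by
      unfold SemiconjBy; rw [mul_assoc]
    have h1 : V * (U * V) ^ N = (V * U) ^ N * V := (hsc.pow_right N)
    calc ((U * V) ^ (N + 1)).trace = (U * (V * (U * V) ^ N)).trace := by
          rw [pow_succ']; rw [mul_assoc]
      _ = (U * ((V * U) ^ N * V)).trace := by rw [h1]
      _ = ((U * (V * U) ^ N) * V).trace := by rw [mul_assoc]
      _ = (V * (U * (V * U) ^ N)).trace := Matrix.trace_mul_comm _ _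
      _ = ((V * U) ^ (N + 1)).trace := by rw [pow_succ', mul_assoc]

end GTaux
open scoped Matrix ComplexOrder

namespace GTaux

variable {d : ℕ}

/-- The master statement Φ(j). -/
def PhiS (d j : ℕ) : Prop :=
  ∀ (X Y : Matrix (Fin d) (Fin d) ℂ), X.PosSemidef → Y.PosSemidef →
    (((X * Y) ^ (2 ^ j)).trace).re ≤ ((X ^ (2 ^ j) * Y ^ (2 ^ j)).trace).re

/-- Cauchy-Schwarz step for two PSD matrices: re tr(P^N Q^N) ≤ re tr(Q^(2N)) when
    tr of powers of P and Q agree. -/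
lemma herm_cs_step {P Q : Matrix (Fin d) (Fin d) ℂ} (hP : P.IsHermitian) (hQ : Q.IsHermitian)
    (N : ℕ) (htr : ((P ^ (2 * N)).trace) = ((Q ^ (2 * N)).trace)) :
    ((Q ^ N * P ^ N).trace).re ≤ ((Q ^ (2 * N)).trace).re := by
  have hQN : (Q ^ N)ᴴ = Q ^ N := by
    rw [Matrix.conjTranspose_pow, hQ.eq]
  have hPN : (P ^ N)ᴴ = P ^ N := by
    rw [Matrix.conjTranspose_pow, hP.eq]
  have h1 : ((Q ^ N * P ^ N).trace).re ≤ ‖(Q ^ N * P ^ N).trace‖ :=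
    Complex.re_le_norm _
  have h2 := cs (Q ^ N) (P ^ N)
  have hq2 : (Q ^ N)ᴴ * Q ^ N = Q ^ (2 * N) := by
    rw [hQN, ← pow_add, two_mul]
  have hp2 : (P ^ N)ᴴ * P ^ N = P ^ (2 * N) := by
    rw [hPN, ← pow_add, two_mul]
  rw [hq2, hp2, htr, hQN] at h2
  have hnn : 0 ≤ ((Q ^ (2 * N)).trace).re := by
    rw [← htr, ← hp2]
    exact trace_herm_sq_re_nonneg _
  calc ((Q ^ N * P ^ N).trace).re ≤ _ := h1
    _ ≤ Real.sqrt (((Q ^ (2 * N)).trace).re) * Real.sqrt (((Q ^ (2 * N)).trace).re) := h2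
    _ = ((Q ^ (2 * N)).trace).re := Real.mul_self_sqrt hnn

/-- A-step: from Φ(j), for any matrix D,
    re tr(((D²)ᴴ D²)^(2^j)) ≤ re tr((Dᴴ D)^(2^(j+1))). -/
lemma Astep {j : ℕ} (hphi : PhiS d j) (D : Matrix (Fin d) (Fin d) ℂ) :
    ((((D ^ 2)ᴴ * D ^ 2) ^ (2 ^ j)).trace).re ≤ (((Dᴴ * D) ^ (2 ^ (j + 1))).trace).re := by
  set P := D * Dᴴ with hPdef
  set Q := Dᴴ * D with hQdef
  have hP : P.PosSemidef := Matrix.posSemidef_self_mul_conjTranspose D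
  have hQ : Q.PosSemidef := Matrix.posSemidef_conjTranspose_mul_self D
  -- identity: tr(((D²)ᴴ D²)^N) = tr((Q*P)^N)
  have hid : ∀ N : ℕ, (((D ^ 2)ᴴ * D ^ 2) ^ N).trace = ((Q * P) ^ N).trace := by
    intro N
    have e1 : (D ^ 2)ᴴ * D ^ 2 = Dᴴ * (Dᴴ * (D * D)) := by
      rw [pow_two, Matrix.conjTranspose_mul]
      noncomm_ring
    have e2 : Q * P = (Dᴴ * (D * D)) * Dᴴ := by
      rw [hQdef, hPdef]; noncomm_ring
    rw [e1, e2]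
    exact trace_pow_mul_comm _ _ N
  -- trace of powers of P and Q agree
  have htr : ∀ N : ℕ, ((P ^ N).trace) = ((Q ^ N).trace) := by
    intro N
    rw [hPdef, hQdef]
    exact trace_pow_mul_comm _ _ N
  have h1 := hphi Q P hQ hP
  have h2 := herm_cs_step hP.1 hQ.1 (2 ^ j) (htr _)
  have h3 : (Q ^ (2 * 2 ^ j)).trace = ((Dᴴ * D) ^ (2 ^ (j + 1))).trace := by
    rw [hQdef, pow_succ']
  calc ((((D ^ 2)ᴴ * D ^ 2) ^ (2 ^ j)).trace).re
      = (((Q * P) ^ (2 ^ j)).trace).re := by rw [hid]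
    _ ≤ ((Q ^ (2 ^ j) * P ^ (2 ^ j)).trace).re := h1
    _ ≤ ((Q ^ (2 * 2 ^ j)).trace).re := h2
    _ = (((Dᴴ * D) ^ (2 ^ (j + 1))).trace).re := by rw [h3]

/-- Ψ: descending chain. -/
lemma psi (j : ℕ) (hphi : ∀ i, i < j → PhiS d i) :
    ∀ k dd, k + dd = j → ∀ C : Matrix (Fin d) (Fin d) ℂ,
      ((((C ^ (2 ^ k))ᴴ * C ^ (2 ^ k)) ^ (2 ^ dd)).trace).re ≤
        (((Cᴴ * C) ^ (2 ^ j)).trace).re := by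
  intro k
  induction k with
  | zero =>
    intro dd h C
    have : dd = j := by omega
    subst this
    simp
  | succ k ih =>
    intro dd h C
    have h' : k + (dd + 1) = j := by omega
    have e1 : C ^ (2 ^ (k + 1)) = (C ^ (2 ^ k)) ^ 2 := by
      rw [← pow_mul, ← pow_succ]
    calc (((C ^ (2 ^ (k + 1)))ᴴ * C ^ (2 ^ (k + 1))) ^ (2 ^ dd)).trace.re
        = ((((C ^ (2 ^ k)) ^ 2)ᴴ * (C ^ (2 ^ k)) ^ 2) ^ (2 ^ dd)).trace.re := by rw [e1]
      _ ≤ (((C ^ (2 ^ k))ᴴ * C ^ (2 ^ k)) ^ (2 ^ (dd + 1))).trace.re :=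
          Astep (hphi dd (by omega)) _
      _ ≤ (((Cᴴ * C) ^ (2 ^ j)).trace).re := ih (dd + 1) h' C

/-- Main inequality Φ(j), by strong induction. -/
lemma phi_all (j : ℕ) : PhiS d j := by
  induction j using Nat.strong_induction_on with
  | _ j ih =>
    match j with
    | 0 => intro X Y hX hY; simp
    | (j + 1) =>
      intro X Y hX hY
      set C := (X * Y) ^ (2 ^ j) with hCdef
      have e1 : (X * Y) ^ (2 ^ (j + 1)) = C * C := by
        rw [hCdef, ← pow_add, ← two_mul, ← pow_succ']
      -- step 1 : Cauchy-Schwarz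
      have step1 : (((X * Y) ^ (2 ^ (j + 1))).trace).re ≤ ((Cᴴ * C).trace).re := by
        have h1 : (((X * Y) ^ (2 ^ (j + 1))).trace).re ≤ ‖(C * C).trace‖ := by
          rw [e1]; exact Complex.re_le_norm _
        have h2 := cs (Cᴴ) C
        rw [Matrix.conjTranspose_conjTranspose, Matrix.trace_mul_comm C Cᴴ] at h2
        have hnn : 0 ≤ ((Cᴴ * C).trace).re := trace_herm_sq_re_nonneg _
        calc (((X * Y) ^ (2 ^ (j + 1))).trace).re ≤ _ := h1
          _ ≤ Real.sqrt (((Cᴴ * C).trace).re) * Real.sqrt (((Cᴴ * C).trace).re) := h2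
          _ = ((Cᴴ * C).trace).re := Real.mul_self_sqrt hnn
      -- step 2 : psi chain
      have step2 : ((Cᴴ * C).trace).re ≤ ((((X * Y)ᴴ * (X * Y)) ^ (2 ^ j)).trace).re := by
        have h := psi (d := d) j (fun i hi => ih i (by omega)) j 0 (by omega) (X * Y)
        simpa [hCdef] using h
      -- step 3 : identity tr(((XY)ᴴ XY)^(2^j)) = tr((X² Y²)^(2^j))
      have step3 : (((X * Y)ᴴ * (X * Y)) ^ (2 ^ j)).trace = ((X ^ 2 * Y ^ 2) ^ (2 ^ j)).trace := by
        have e2 : (X * Y)ᴴ * (X * Y) = Y * (X * (X * Y)) := by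
          rw [Matrix.conjTranspose_mul, hX.1.eq, hY.1.eq]; noncomm_ring
        have e3 : (X * (X * Y)) * Y = X ^ 2 * Y ^ 2 := by noncomm_ring
        rw [e2, ← e3]
        exact trace_pow_mul_comm _ _ _
      -- step 4 : induction hypothesis on X², Y²
      have step4 : (((X ^ 2 * Y ^ 2) ^ (2 ^ j)).trace).re ≤
          ((X ^ (2 ^ (j + 1)) * Y ^ (2 ^ (j + 1))).trace).re := by
        have h := ih j (by omega) (X ^ 2) (Y ^ 2) (hX.pow 2) (hY.pow 2)
        have e4 : ∀ Z : Matrix (Fin d) (Fin d) ℂ, (Z ^ 2) ^ (2 ^ j) = Z ^ (2 ^ (j + 1)) := by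
          intro Z; rw [← pow_mul, ← pow_succ']
        rwa [e4, e4] at h
      calc (((X * Y) ^ (2 ^ (j + 1))).trace).re ≤ _ := step1
        _ ≤ _ := step2
        _ = (((X ^ 2 * Y ^ 2) ^ (2 ^ j)).trace).re := by rw [step3]
        _ ≤ _ := step4

end GTaux
namespace GTaux

open NormedSpace Filter

section Normed

attribute [local instance] Matrix.linftyOpNormedRing Matrix.linftyOpNormedAlgebra

variable {d : ℕ}

local notation "Mat" => Matrix (Fin d) (Fin d) ℂ

example : CompleteSpace Mat := by infer_instance

lemma norm_one_le : ‖(1 : Mat)‖ ≤ 1 := by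
  rw [← Matrix.diagonal_one, Matrix.linfty_opNorm_diagonal]
  refine pi_norm_le_iff_of_nonneg zero_le_one |>.2 fun i => ?_
  simp

lemma entry_le_norm (M : Mat) (i k : Fin d) : ‖M i k‖ ≤ ‖M‖ := by
  rw [Matrix.linfty_opNorm_def]
  have h1 : ‖M i k‖₊ ≤ ∑ j, ‖M i j‖₊ :=
    Finset.single_le_sum (f := fun j => ‖M i j‖₊) (fun j _ => zero_le) (Finset.mem_univ k)
  have h2 : (∑ j, ‖M i j‖₊) ≤ Finset.univ.sup fun i => ∑ j, ‖M i j‖₊ :=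
    Finset.le_sup (f := fun i => ∑ j, ‖M i j‖₊) (Finset.mem_univ i)
  have := h1.trans h2
  exact_mod_cast this

lemma abs_trace_le (M : Mat) : ‖M.trace‖ ≤ d * ‖M‖ := by
  calc ‖M.trace‖ ≤ ∑ i, ‖M.diag i‖ := norm_sum_le _ _
    _ = ∑ i, ‖M i i‖ := by simp [Matrix.diag]
    _ ≤ ∑ _i : Fin d, ‖M‖ := Finset.sum_le_sum fun i _ => entry_le_norm M i i
    _ = d * ‖M‖ := by simp [Finset.sum_const, nsmul_eq_mul]

end Normed
end GTaux
namespace GTaux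
open NormedSpace Filter
open scoped Nat
section Normed2
attribute [local instance] Matrix.linftyOpNormedRing Matrix.linftyOpNormedAlgebra
set_option maxHeartbeats 1000000
variable {d : ℕ}
local notation "Mat" => Matrix (Fin d) (Fin d) ℂ

lemma real_exp_tsum (t : ℝ) : ∑' n : ℕ, t ^ n / n ! = Real.exp t := by
  rw [Real.exp_eq_exp_ℝ, NormedSpace.exp_eq_tsum_div]

lemma norm_pow_le_of_le {x : Mat} {K : ℝ} (hx : ‖x‖ ≤ K) : ∀ k : ℕ, ‖x ^ k‖ ≤ K ^ k := by
  intro k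
  induction k with
  | zero =>
    rw [pow_zero, pow_zero]
    exact norm_one_le
  | succ k ih =>
    have hK0 : (0:ℝ) ≤ K := (norm_nonneg x).trans hx
    calc ‖x ^ (k+1)‖ = ‖x ^ k * x‖ := by rw [pow_succ]
      _ ≤ ‖x ^ k‖ * ‖x‖ := norm_mul_le _ _
      _ ≤ K ^ k * K := mul_le_mul ih hx (norm_nonneg x) (pow_nonneg hK0 k)
      _ = K ^ (k+1) := by rw [pow_succ]

lemma term_norm_le (x : Mat) (n : ℕ) : ‖((n ! : ℂ))⁻¹ • x ^ n‖ ≤ ‖x‖ ^ n / n ! := by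
  rw [norm_smul, norm_inv, Complex.norm_natCast, div_eq_inv_mul]
  exact mul_le_mul_of_nonneg_left (norm_pow_le_of_le le_rfl n) (by positivity)

lemma norm_exp_le (x : Mat) : ‖exp x‖ ≤ Real.exp ‖x‖ := by
  rw [exp_eq_tsum ℂ]
  refine le_trans (tsum_of_norm_bounded (Real.summable_pow_div_factorial ‖x‖).hasSum
    (term_norm_le x)) ?_
  rw [real_exp_tsum]

lemma exp_tail (x : Mat) : ‖exp x - 1 - x‖ ≤ ‖x‖ ^ 2 * Real.exp ‖x‖ := by
  have hs : Summable (fun n : ℕ => ((n ! : ℂ))⁻¹ • x ^ n) := expSeries_summable' x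
  have hs1 : Summable (fun n : ℕ => (((n + 1)! : ℂ))⁻¹ • x ^ (n + 1)) :=
    (summable_nat_add_iff (f := fun n : ℕ => ((n ! : ℂ))⁻¹ • x ^ n) 1).2 hs
  have hs2 : Summable (fun n : ℕ => (((n + 2)! : ℂ))⁻¹ • x ^ (n + 2)) := by
    have h := (summable_nat_add_iff (f := fun n : ℕ => ((n ! : ℂ))⁻¹ • x ^ n) 2).2 hs
    exact h
  have hdec : exp x = 1 + x + ∑' n : ℕ, (((n + 2)! : ℂ))⁻¹ • x ^ (n + 2) := by
    rw [exp_eq_tsum ℂ]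
    dsimp only
    rw [Summable.tsum_eq_zero_add hs, Summable.tsum_eq_zero_add hs1]
    simp [add_assoc]
  have heq : exp x - 1 - x = ∑' n : ℕ, (((n + 2)! : ℂ))⁻¹ • x ^ (n + 2) := by
    rw [hdec]; abel
  rw [heq]
  have hbound : ∀ n : ℕ, ‖(((n + 2)! : ℂ))⁻¹ • x ^ (n + 2)‖ ≤ ‖x‖ ^ 2 * (‖x‖ ^ n / n !) := by
    intro n
    refine le_trans (term_norm_le x (n + 2)) ?_
    have h2 : (n ! : ℝ) ≤ ((n + 2)! : ℝ) := by
      exact_mod_cast Nat.factorial_le (by omega)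
    have h3 : (0:ℝ) < n ! := by positivity
    have h5 : ‖x‖ ^ 2 * (‖x‖ ^ n / n !) = ‖x‖ ^ (n + 2) / n ! := by
      field_simp
      ring
    rw [h5]
    exact div_le_div_of_nonneg_left (by positivity) h3 h2
  have hg : HasSum (fun n : ℕ => ‖x‖ ^ 2 * (‖x‖ ^ n / n !)) (‖x‖ ^ 2 * Real.exp ‖x‖) := by
    have := (Real.summable_pow_div_factorial ‖x‖).hasSum
    rw [real_exp_tsum ‖x‖] at this
    exact this.mul_left _
  exact tsum_of_norm_bounded hg hbound

lemma pow_sub_pow_norm {x y : Mat} {K : ℝ} (hx : ‖x‖ ≤ K) (hy : ‖y‖ ≤ K) :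
    ∀ N : ℕ, ‖x ^ N - y ^ N‖ ≤ N * K ^ (N - 1) * ‖x - y‖ := by
  intro N
  have hK0 : (0:ℝ) ≤ K := (norm_nonneg x).trans hx
  induction N with
  | zero => simp
  | succ N ih =>
    have key : x ^ (N + 1) - y ^ (N + 1) = x ^ N * (x - y) + (x ^ N - y ^ N) * y := by
      noncomm_ring
    have h2 : ‖(x ^ N - y ^ N) * y‖ ≤ (N * K ^ (N - 1) * ‖x - y‖) * K := by
      calc ‖(x ^ N - y ^ N) * y‖ ≤ ‖x ^ N - y ^ N‖ * ‖y‖ := norm_mul_le _ _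
        _ ≤ (N * K ^ (N - 1) * ‖x - y‖) * K := by
            refine mul_le_mul ih hy (norm_nonneg _) ?_
            positivity
    have h3 : (N : ℝ) * K ^ (N - 1) * ‖x - y‖ * K ≤ N * K ^ N * ‖x - y‖ := by
      rcases Nat.eq_zero_or_pos N with h | h
      · subst h; simp
      · have : K ^ (N - 1) * K = K ^ N := by
          rw [← pow_succ]
          congr 1
          omega
        exact le_of_eq (by rw [← this]; ring)
    calc ‖x ^ (N + 1) - y ^ (N + 1)‖ = ‖x ^ N * (x - y) + (x ^ N - y ^ N) * y‖ := by rw [key]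
      _ ≤ ‖x ^ N * (x - y)‖ + ‖(x ^ N - y ^ N) * y‖ := norm_add_le _ _
      _ ≤ ‖x ^ N‖ * ‖x - y‖ + N * K ^ (N - 1) * ‖x - y‖ * K := by
          refine add_le_add (norm_mul_le _ _) h2
      _ ≤ K ^ N * ‖x - y‖ + N * K ^ N * ‖x - y‖ := by
          refine add_le_add (mul_le_mul_of_nonneg_right (norm_pow_le_of_le hx N) (norm_nonneg _)) h3
      _ = (↑(N + 1) : ℝ) * K ^ ((N + 1) - 1) * ‖x - y‖ := by
          simp only [Nat.add_sub_cancel]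
          push_cast
          ring

end Normed2
end GTaux
namespace GTaux
open NormedSpace Filter
open scoped Nat Topology
section Normed3
attribute [local instance] Matrix.linftyOpNormedRing Matrix.linftyOpNormedAlgebra
set_option maxHeartbeats 1000000
variable {d : ℕ}
local notation "Mat" => Matrix (Fin d) (Fin d) ℂ

lemma exp_smul_pow (a : Mat) (j : ℕ) :
    (exp ((((2:ℂ) ^ j))⁻¹ • a)) ^ (2 ^ j : ℕ) = exp a := by
  refine (NormedSpace.exp_nsmul _ _).symm.trans ?_
  congr 1
  rw [← Nat.cast_smul_eq_nsmul ℂ, smul_smul]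
  push_cast
  rw [mul_inv_cancel₀ (pow_ne_zero _ (by norm_num : (2:ℂ) ≠ 0)), one_smul]

lemma posSemidef_exp {h : Mat} (hh : h.IsHermitian) : (exp h).PosSemidef := by
  have h2 : ((2⁻¹ : ℂ) • h).IsHermitian := by
    rw [Matrix.IsHermitian, Matrix.conjTranspose_smul, hh.eq]
    congr 1
    simp
  have hE : (exp ((2⁻¹ : ℂ) • h)).IsHermitian := Matrix.IsHermitian.exp h2
  have hsplit : exp h = (exp ((2⁻¹:ℂ) • h))ᴴ * exp ((2⁻¹:ℂ) • h) := by
    rw [hE.eq]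
    refine Eq.trans ?_ (NormedSpace.exp_add_of_commute (Commute.refl _))
    congr 1
    rw [← add_smul]
    norm_num
  rw [hsplit]
  exact Matrix.posSemidef_conjTranspose_mul_self _

lemma expdiff (u v : Mat) {r : ℝ} (hr : ‖u‖ + ‖v‖ ≤ r) :
    ‖exp u * exp v - exp (u + v)‖ ≤
      (‖u‖ + ‖v‖) ^ 2 *
        (1 + (1 + r) * Real.exp r + Real.exp r * Real.exp r + Real.exp r) := by
  have hr0 : (0:ℝ) ≤ r := le_trans (by positivity) hr
  set s := ‖u‖ + ‖v‖ with hs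
  have hs0 : (0:ℝ) ≤ s := by positivity
  have hus : ‖u‖ ≤ s := by rw [hs]; linarith [norm_nonneg v]
  have hvs : ‖v‖ ≤ s := by rw [hs]; linarith [norm_nonneg u]
  set Ru := exp u - 1 - u with hRu
  set Rv := exp v - 1 - v with hRv
  set Rw := exp (u + v) - 1 - (u + v) with hRw
  have eu : exp u = 1 + u + Ru := by rw [hRu]; abel
  have ev : exp v = 1 + v + Rv := by rw [hRv]; abel
  have ew : exp (u + v) = 1 + (u + v) + Rw := by rw [hRw]; abel
  have hid : exp u * exp v - exp (u + v) =
      u * v + (1 + u) * Rv + Ru * exp v - Rw := by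
    rw [ev, eu, ew]
    noncomm_ring
  have bu : ‖Ru‖ ≤ s ^ 2 * Real.exp r := by
    refine le_trans (exp_tail u) ?_
    have := Real.exp_le_exp.2 (hus.trans hr)
    have h2 : ‖u‖ ^ 2 ≤ s ^ 2 := by nlinarith [norm_nonneg u]
    nlinarith [Real.exp_pos ‖u‖, Real.exp_pos r, norm_nonneg u, sq_nonneg ‖u‖]
  have bv : ‖Rv‖ ≤ s ^ 2 * Real.exp r := by
    refine le_trans (exp_tail v) ?_
    have := Real.exp_le_exp.2 (hvs.trans hr)
    have h2 : ‖v‖ ^ 2 ≤ s ^ 2 := by nlinarith [norm_nonneg v]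
    nlinarith [Real.exp_pos ‖v‖, Real.exp_pos r, norm_nonneg v, sq_nonneg ‖v‖]
  have bw : ‖Rw‖ ≤ s ^ 2 * Real.exp r := by
    refine le_trans (exp_tail (u + v)) ?_
    have h1 : ‖u + v‖ ≤ s := (norm_add_le u v)
    have := Real.exp_le_exp.2 (h1.trans hr)
    have h2 : ‖u + v‖ ^ 2 ≤ s ^ 2 := by nlinarith [norm_nonneg (u + v)]
    nlinarith [Real.exp_pos ‖u + v‖, Real.exp_pos r, norm_nonneg (u + v)]
  have buv : ‖u * v‖ ≤ s ^ 2 := by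
    refine le_trans (norm_mul_le _ _) ?_
    nlinarith [norm_nonneg u, norm_nonneg v]
  have b1u : ‖(1:Mat) + u‖ ≤ 1 + r := by
    refine le_trans (norm_add_le _ _) ?_
    have := hus.trans hr
    have := norm_one_le (d := d)
    linarith
  have bev : ‖exp v‖ ≤ Real.exp r := by
    refine le_trans (norm_exp_le v) (Real.exp_le_exp.2 (hvs.trans hr))
  rw [hid]
  have t1 : ‖u * v + (1 + u) * Rv + Ru * exp v - Rw‖ ≤
      ‖u * v‖ + ‖(1 + u) * Rv‖ + ‖Ru * exp v‖ + ‖Rw‖ := by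
    calc ‖u * v + (1 + u) * Rv + Ru * exp v - Rw‖
        ≤ ‖u * v + (1 + u) * Rv + Ru * exp v‖ + ‖Rw‖ := norm_sub_le _ _
      _ ≤ ‖u * v + (1 + u) * Rv‖ + ‖Ru * exp v‖ + ‖Rw‖ := by
          have := norm_add_le (u * v + (1 + u) * Rv) (Ru * exp v)
          linarith
      _ ≤ ‖u * v‖ + ‖(1 + u) * Rv‖ + ‖Ru * exp v‖ + ‖Rw‖ := by
          have := norm_add_le (u * v) ((1 + u) * Rv)
          linarith
  have t2 : ‖(1 + u) * Rv‖ ≤ (1 + r) * (s ^ 2 * Real.exp r) := by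
    refine le_trans (norm_mul_le _ _) ?_
    refine mul_le_mul b1u bv (norm_nonneg _) (by linarith)
  have t3 : ‖Ru * exp v‖ ≤ (s ^ 2 * Real.exp r) * Real.exp r := by
    refine le_trans (norm_mul_le _ _) ?_
    refine mul_le_mul bu bev (norm_nonneg _) (by positivity)
  calc ‖u * v + (1 + u) * Rv + Ru * exp v - Rw‖
      ≤ ‖u * v‖ + ‖(1 + u) * Rv‖ + ‖Ru * exp v‖ + ‖Rw‖ := t1
    _ ≤ s ^ 2 + (1 + r) * (s ^ 2 * Real.exp r) + (s ^ 2 * Real.exp r) * Real.exp r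
          + s ^ 2 * Real.exp r := by linarith
    _ = s ^ 2 * (1 + (1 + r) * Real.exp r + Real.exp r * Real.exp r + Real.exp r) := by ring

lemma trotter (a b : Mat) :
    Tendsto (fun j : ℕ =>
        (exp ((((2:ℂ) ^ j))⁻¹ • a) * exp ((((2:ℂ) ^ j))⁻¹ • b)) ^ (2 ^ j : ℕ))
      atTop (𝓝 (exp (a + b))) := by
  set c := ‖a‖ + ‖b‖ with hc
  have hc0 : (0:ℝ) ≤ c := by positivity
  set E := Real.exp c with hE
  set Ec := 1 + (1 + c) * E + E * E + E with hEc
  have hEc0 : (0:ℝ) ≤ Ec := by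
    have := Real.exp_pos c
    rw [hEc, hE]
    nlinarith
  set D := E * Ec * c ^ 2 with hD
  have key : ∀ j : ℕ,
      ‖(exp ((((2:ℂ) ^ j))⁻¹ • a) * exp ((((2:ℂ) ^ j))⁻¹ • b)) ^ (2 ^ j : ℕ)
        - exp (a + b)‖ ≤ D * (1 / 2 : ℝ) ^ j := by
    intro j
    set u := (((2:ℂ) ^ j))⁻¹ • a with hu
    set v := (((2:ℂ) ^ j))⁻¹ • b with hv
    have h2j : (0:ℝ) < 2 ^ j := by positivity
    have hnu : ‖u‖ = ‖a‖ / 2 ^ j := by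
      rw [hu, norm_smul, norm_inv, norm_pow, Complex.norm_ofNat, div_eq_inv_mul]
    have hnv : ‖v‖ = ‖b‖ / 2 ^ j := by
      rw [hv, norm_smul, norm_inv, norm_pow, Complex.norm_ofNat, div_eq_inv_mul]
    have hruv : ‖u‖ + ‖v‖ = c / 2 ^ j := by
      rw [hnu, hnv, hc]; ring
    have hrc : c / 2 ^ j ≤ c := by
      exact div_le_self hc0 (one_le_pow₀ (by norm_num : (1:ℝ) ≤ 2))
    have hdiff := expdiff u v (r := c) (le_of_eq_of_le hruv hrc)
    have hdiff2 : ‖exp u * exp v - exp (u + v)‖ ≤ (c / 2 ^ j) ^ 2 * Ec := by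
      rw [hruv] at hdiff
      exact hdiff
    have hXn : ‖exp u * exp v‖ ≤ Real.exp (c / 2 ^ j) := by
      calc ‖exp u * exp v‖ ≤ ‖exp u‖ * ‖exp v‖ := norm_mul_le _ _
        _ ≤ Real.exp ‖u‖ * Real.exp ‖v‖ :=
            mul_le_mul (norm_exp_le u) (norm_exp_le v) (norm_nonneg _) (Real.exp_pos _).le
        _ = Real.exp (‖u‖ + ‖v‖) := (Real.exp_add _ _).symm
        _ = Real.exp (c / 2 ^ j) := by rw [hruv]
    have hYn : ‖exp (u + v)‖ ≤ Real.exp (c / 2 ^ j) := by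
      refine (norm_exp_le _).trans (Real.exp_le_exp.2 ?_)
      exact (norm_add_le u v).trans (le_of_eq hruv)
    have hpow := pow_sub_pow_norm hXn hYn (2 ^ j)
    have hYpow : (exp (u + v)) ^ (2 ^ j : ℕ) = exp (a + b) := by
      have huv : u + v = (((2:ℂ) ^ j))⁻¹ • (a + b) := by rw [hu, hv, smul_add]
      rw [huv]
      exact exp_smul_pow (a + b) j
    have hK1 : (1:ℝ) ≤ Real.exp (c / 2 ^ j) := Real.one_le_exp (by positivity)
    have hKpow : (Real.exp (c / 2 ^ j)) ^ (2 ^ j - 1 : ℕ) ≤ E := by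
      calc (Real.exp (c / 2 ^ j)) ^ (2 ^ j - 1 : ℕ)
          ≤ (Real.exp (c / 2 ^ j)) ^ (2 ^ j : ℕ) := pow_le_pow_right₀ hK1 (Nat.sub_le _ _)
        _ = Real.exp ((2 ^ j : ℕ) * (c / 2 ^ j)) := by rw [Real.exp_nat_mul]
        _ = E := by
            rw [hE]
            congr 1
            push_cast
            field_simp
    calc ‖(exp u * exp v) ^ (2 ^ j : ℕ) - exp (a + b)‖
        = ‖(exp u * exp v) ^ (2 ^ j : ℕ) - (exp (u + v)) ^ (2 ^ j : ℕ)‖ := by rw [hYpow]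
      _ ≤ (2 ^ j : ℕ) * (Real.exp (c / 2 ^ j)) ^ (2 ^ j - 1 : ℕ)
            * ‖exp u * exp v - exp (u + v)‖ := hpow
      _ ≤ (2 ^ j : ℕ) * E * ((c / 2 ^ j) ^ 2 * Ec) := by
          refine mul_le_mul ?_ hdiff2 (norm_nonneg _) ?_
          · refine mul_le_mul le_rfl hKpow (by positivity) (by positivity)
          · have h1 : (0:ℝ) ≤ E := (Real.exp_pos c).le
            positivity
      _ = D * (1 / 2 : ℝ) ^ j := by
          rw [hD]
          push_cast
          field_simp
          have h22 : (2:ℝ) ^ j * (1 / 2) ^ j = 1 := by rw [← mul_pow]; norm_num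
          linear_combination (-(E * c ^ 2 * Ec)) * h22
  have h0 : Tendsto (fun j : ℕ => D * (1 / 2 : ℝ) ^ j) atTop (𝓝 0) := by
    have h1 := tendsto_pow_atTop_nhds_zero_of_lt_one
      (by norm_num : (0:ℝ) ≤ 1 / 2) (by norm_num : (1 / 2 : ℝ) < 1)
    simpa using h1.const_mul D
  exact tendsto_sub_nhds_zero_iff.mp (squeeze_zero_norm key h0)

end Normed3
end GTaux
namespace GTaux
open NormedSpace Filter
open scoped Nat Topology Matrix

lemma herm_trace_im {d : ℕ} {M : Matrix (Fin d) (Fin d) ℂ} (hM : M.IsHermitian) :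
    (M.trace).im = 0 := by
  rw [Matrix.trace, Complex.im_sum]
  refine Finset.sum_eq_zero fun i _ => ?_
  have h := congrFun (congrFun hM.eq i) i
  rw [Matrix.conjTranspose_apply] at h
  have := Complex.conj_eq_iff_im.mp h
  simpa [Matrix.diag] using this

lemma herm_mul_trace_im {d : ℕ} {P Q : Matrix (Fin d) (Fin d) ℂ}
    (hP : P.IsHermitian) (hQ : Q.IsHermitian) : ((P * Q).trace).im = 0 := by
  have h1 : star ((P * Q).trace) = (P * Q).trace := by
    rw [← Matrix.trace_conjTranspose, Matrix.conjTranspose_mul, hP.eq, hQ.eq,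
      Matrix.trace_mul_comm]
  rw [Complex.star_def] at h1
  exact Complex.conj_eq_iff_im.mp h1

section Normed4
attribute [local instance] Matrix.linftyOpNormedRing Matrix.linftyOpNormedAlgebra
set_option maxHeartbeats 1000000
variable {d : ℕ}

lemma trace_tendsto {F : ℕ → Matrix (Fin d) (Fin d) ℂ} {L : Matrix (Fin d) (Fin d) ℂ}
    (h : Tendsto F atTop (𝓝 L)) :
    Tendsto (fun j => ((F j).trace).re) atTop (𝓝 ((L.trace).re)) := by
  have h1 : Tendsto (fun j => F j - L) atTop (𝓝 0) := tendsto_sub_nhds_zero_iff.2 h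
  have h2 : Tendsto (fun j => ‖F j - L‖) atTop (𝓝 0) := by
    have := h1.norm
    simpa using this
  have h3 : Tendsto (fun j => (F j).trace) atTop (𝓝 L.trace) := by
    rw [← tendsto_sub_nhds_zero_iff]
    refine squeeze_zero_norm (a := fun j => d * ‖F j - L‖) (fun j => ?_) ?_
    · rw [← Matrix.trace_sub]
      exact abs_trace_le _
    · simpa using h2.const_mul (d : ℝ)
  exact (Complex.continuous_re.tendsto _).comp h3

lemma key (d : ℕ) (a b : Matrix (Fin d) (Fin d) ℂ)
    (ha : a.IsHermitian) (hb : b.IsHermitian) :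
    (exp (a + b)).trace ≤ (exp a * exp b).trace := by
  have hsmul : ∀ (j : ℕ) (m : Matrix (Fin d) (Fin d) ℂ), m.IsHermitian →
      ((((2:ℂ) ^ j))⁻¹ • m).IsHermitian := by
    intro j m hm
    rw [Matrix.IsHermitian, Matrix.conjTranspose_smul, hm.eq]
    congr 1
    simp
  rw [Complex.le_def]
  constructor
  · have hb1 : ∀ j : ℕ,
        (((exp ((((2:ℂ) ^ j))⁻¹ • a) * exp ((((2:ℂ) ^ j))⁻¹ • b)) ^ (2 ^ j : ℕ)).trace).re
          ≤ ((exp a * exp b).trace).re := by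
      intro j
      have h := phi_all (d := d) j _ _
        (posSemidef_exp (hsmul j a ha)) (posSemidef_exp (hsmul j b hb))
      rwa [exp_smul_pow a j, exp_smul_pow b j] at h
    have hconv := trace_tendsto (trotter (d := d) a b)
    exact le_of_tendsto hconv (Filter.Eventually.of_forall hb1)
  · rw [herm_trace_im (Matrix.IsHermitian.exp (ha.add hb)),
      herm_mul_trace_im (Matrix.IsHermitian.exp ha) (Matrix.IsHermitian.exp hb)]

end Normed4
end GTaux

open scoped ComplexOrder

theorem stmt12 (n : ℕ) (a b : Matrix (Fin n) (Fin n) ℂ)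
    (ha : a.IsHermitian) (hb : b.IsHermitian) :
    (NormedSpace.exp (a + b)).trace ≤ (NormedSpace.exp a * NormedSpace.exp b).trace := by
  exact GTaux.key n a b ha hb
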